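/- A Pachner move on a simplicial complex C can be expressed as the composition of two stellar operations: a stellar subdivision of the simplex A at a new vertex v, followed by an inverse stellar subdivision (stellar weld) at v of the simplex B. That is, if C' is obtained from C by a Pachner move on A with inserted simplex B, and v is a vertex not in C, then the stellar subdivision of C at A with new vertex v equals the stellar subdivision of C' at B with new vertex v. -/

import Mathlib

open Finset

/-- A finite abstract simplicial complex: nonempty simplices, closed under nonempty subsets. -/
def IsComplex (C : Finset (Finset ℕ)) : Prop :=
  ∀ S ∈ C, S ≠ ∅ ∧ ∀ T, T ⊆ S → T ≠ ∅ → T ∈ C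

/-- Pure of dimension d: every simplex lies in a simplex of cardinality d+1. -/
def IsPure (d : ℕ) (C : Finset (Finset ℕ)) : Prop :=
  ∀ S ∈ C, ∃ M ∈ C, S ⊆ M ∧ M.card = d + 1

/-- The link of a simplex A in C. -/
def slink (A : Finset ℕ) (C : Finset (Finset ℕ)) : Finset (Finset ℕ) :=
  C.filter (fun L => Disjoint A L ∧ A ∪ L ∈ C)

/-- The boundary of a simplex B: all nonempty proper subsets of B. -/
def sbdry (B : Finset ℕ) : Finset (Finset ℕ) :=
  B.powerset.filter (fun S => S ≠ ∅ ∧ S ≠ B)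

/-- The Pachner move on A with inserted simplex B: delete all simplices containing A,
add B together with the joins of B with the proper (possibly empty) faces of A. -/
def pachner (C : Finset (Finset ℕ)) (A B : Finset ℕ) : Finset (Finset ℕ) :=
  C.filter (fun S => ¬ A ⊆ S) ∪ (A.powerset.filter (fun F => F ≠ A)).image (fun F => B ∪ F)

/-- Number of i-dimensional simplices (cardinality i+1). -/
def fcount (i : ℕ) (C : Finset (Finset ℕ)) : ℕ :=
  (C.filter (fun S => S.card = i + 1)).card

/-- Euler characteristic: alternating sum of face numbers. -/
def eulerChar (C : Finset (Finset ℕ)) : ℤ :=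
  ∑ S ∈ C, (-1 : ℤ) ^ (S.card - 1)

/-- The stellar subdivision of C at A with new vertex v: remove all simplices containing A
and add the sets {v} ∪ F ∪ L for F a proper (possibly empty) face of A and L a
(possibly empty) simplex of the link of A. -/
def stellar (C : Finset (Finset ℕ)) (A : Finset ℕ) (v : ℕ) : Finset (Finset ℕ) :=
  C.filter (fun S => ¬ A ⊆ S) ∪
    ((A.powerset.filter (fun F => F ≠ A)) ×ˢ (insert ∅ (slink A C))).image
      (fun p => insert v (p.1 ∪ p.2))

/-- a Pachner move is the composition of a stellar subdivision and an inverse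
stellar subdivision: subdividing C at A with new vertex v gives the same complex as
subdividing the moved complex at B with new vertex v. -/
theorem pachner_eq_stellar_comp (d k : ℕ) (hk : k ≤ d)
    (C : Finset (Finset ℕ)) (A B : Finset ℕ) (v : ℕ)
    (hC : IsComplex C) (hpure : IsPure d C)
    (hA : A ∈ C) (hAcard : A.card = k + 1)
    (hBcard : B.card = d - k + 1) (hB : B ∉ C)
    (hdisj : Disjoint A B)
    (hlink : slink A C = sbdry B)
    (hv : ∀ S ∈ C, v ∉ S) (hvB : v ∉ B) :
    stellar C A v = stellar (pachner C A B) B v := by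
  have hBne : B ≠ ∅ := by
    intro h; rw [h] at hBcard; simp at hBcard
  have hAne : A ≠ ∅ := (hC A hA).1
  have hnoB : ∀ S ∈ C, ¬ B ⊆ S := fun S hS hBS => hB ((hC S hS).2 B hBS hBne)
  have hfilter : (pachner C A B).filter (fun S => ¬ B ⊆ S)
      = C.filter (fun S => ¬ A ⊆ S) := by
    ext S
    simp only [pachner, mem_filter, mem_union, mem_image, mem_powerset]
    constructor
    · rintro ⟨h1 | ⟨F, ⟨hF1, hF2⟩, rfl⟩, h2⟩
      · exact h1
      · exact absurd subset_union_left h2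
    · intro h
      exact ⟨Or.inl h, hnoB S h.1⟩
  have hsl : slink B (pachner C A B) = sbdry A := by
    ext L
    unfold slink sbdry pachner
    simp only [mem_filter, mem_union, mem_image, mem_powerset]
    constructor
    · rintro ⟨hLmem, hdis, hBL⟩
      have hex : ∃ F, ((F ⊆ A ∧ F ≠ A) ∧ B ∪ F = B ∪ L) := by
        rcases hBL with ⟨hmem, _⟩ | h
        · exact absurd subset_union_left (hnoB _ hmem)
        · exact h
      obtain ⟨F, ⟨hFA, hFne⟩, hEq⟩ := hex
      have hFB : Disjoint B F := hdisj.symm.mono_right hFA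
      have hLF : L = F := by
        apply Subset.antisymm
        · intro x hx
          have hx2 : x ∈ B ∪ F := by rw [hEq]; exact mem_union_right _ hx
          rcases mem_union.1 hx2 with h | h
          · exact absurd hx (disjoint_left.1 hdis h)
          · exact h
        · intro x hx
          have hx2 : x ∈ B ∪ L := by rw [← hEq]; exact mem_union_right _ hx
          rcases mem_union.1 hx2 with h | h
          · exact absurd hx (disjoint_left.1 hFB h)
          · exact h
      have hLne : L ≠ ∅ := by
        rcases hLmem with ⟨hmem, _⟩ | ⟨F', _, rfl⟩
        · exact (hC L hmem).1
        · intro h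
          have : B ⊆ B ∪ F' := subset_union_left
          have hB0 : B = ∅ := eq_empty_iff_forall_notMem.2 fun x hx =>
            disjoint_left.1 hdis hx (this hx)
          exact hBne hB0
      subst hLF
      exact ⟨hFA, hLne, hFne⟩
    · rintro ⟨hLA, hLne, hLneA⟩
      have hLC : L ∈ C := (hC A hA).2 L hLA hLne
      refine ⟨Or.inl ⟨hLC, fun hAL => hLneA (Subset.antisymm hLA hAL)⟩,
        hdisj.symm.mono_right hLA, Or.inr ⟨L, ⟨hLA, hLneA⟩, rfl⟩⟩
  have hins : ∀ (X : Finset ℕ), X ≠ ∅ →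
      insert ∅ (sbdry X) = X.powerset.filter (fun S => S ≠ X) := by
    intro X hX
    ext S
    simp only [mem_insert, sbdry, mem_filter, mem_powerset]
    constructor
    · rintro (rfl | ⟨h1, h2, h3⟩)
      · exact ⟨empty_subset _, Ne.symm hX⟩
      · exact ⟨h1, h3⟩
    · rintro ⟨h1, h2⟩
      by_cases h : S = ∅
      · exact Or.inl h
      · exact Or.inr ⟨h1, h, h2⟩
  unfold stellar
  rw [hlink, hsl, hfilter, hins B hBne, hins A hAne]
  congr 1
  ext S
  simp only [mem_image, mem_product, mem_filter, mem_powerset, Prod.exists]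
  constructor
  · rintro ⟨F, L, ⟨⟨hF1, hF2⟩, ⟨hL1, hL2⟩⟩, rfl⟩
    exact ⟨L, F, ⟨⟨hL1, hL2⟩, ⟨hF1, hF2⟩⟩, by rw [union_comm]⟩
  · rintro ⟨L, F, ⟨⟨hL1, hL2⟩, ⟨hF1, hF2⟩⟩, rfl⟩
    exact ⟨F, L, ⟨⟨hF1, hF2⟩, ⟨hL1, hL2⟩⟩, by rw [union_comm]⟩
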